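/- For every δ > 0 the noisy voter model on any finite graph with n vertices mixes in time O(log n): for every ε ∈ (0,1), if t ≥ ((2δ+1)/(2δ))·log(n/ε), then for every initial configuration η ∈ {0,1}^{V(G)} and every stationary distribution μ one has ‖P_t(η,·) − μ‖ ≤ ε; in particular the total variation mixing time satisfies t_mix(ε) ≤ ((2δ+1)/(2δ))·log(n/ε). -/

import Mathlib

open Finset
set_option linter.unusedSectionVars false
set_option maxHeartbeats 1000000

/-- Total variation distance between two (probability) measures on a finite set:
the maximum over all events `A` of `|μ₁(A) - μ₂(A)|`. -/
noncomputable def tvDist {S : Type*} [Fintype S] (μ ν : S → ℝ) : ℝ :=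
  Finset.univ.powerset.sup' (Finset.powerset_nonempty _) fun A =>
    |∑ s ∈ A, μ s - ∑ s ∈ A, ν s|

/-- Flip rate of the noisy voter model with noise `δ` at vertex `x` in configuration `η`. -/
noncomputable def nvRate {V : Type*} [Fintype V] (G : SimpleGraph V) [DecidableRel G.Adj]
    (δ : ℝ) (x : V) (η : V → Bool) : ℝ :=
  (1 / (2 * δ + 1)) *
    ((1 / (G.degree x : ℝ)) * ((Finset.univ.filter fun y => G.Adj x y ∧ η y ≠ η x).card : ℝ) + δ)

/-- The rate matrix of the noisy voter model: single-spin flips occur at rate `nvRate`,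
transitions changing two or more spins have rate `0`, and diagonal entries make rows sum to `0`. -/
noncomputable def nvQ {V : Type*} [Fintype V] [DecidableEq V] (G : SimpleGraph V)
    [DecidableRel G.Adj] (δ : ℝ) : Matrix (V → Bool) (V → Bool) ℝ := fun η η' =>
  if η = η' then -∑ x, nvRate G δ x η
  else if (Finset.univ.filter fun v => η v ≠ η' v).card = 1 then
    ∑ x ∈ Finset.univ.filter (fun v => η v ≠ η' v), nvRate G δ x η
  else 0

section Flip

variable {V : Type*} [Fintype V] [DecidableEq V]

def nvFlip (x : V) (η : V → Bool) : V → Bool := Function.update η x (!η x)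

lemma nvFlip_apply (x : V) (η : V → Bool) (v : V) :
    nvFlip x η v = if v = x then !η x else η v := by
  simp [nvFlip, Function.update]

@[simp] lemma nvFlip_self (x : V) (η : V → Bool) : nvFlip x η x = !η x := by simp [nvFlip]

lemma nvFlip_ne (x : V) (η : V → Bool) {v : V} (h : v ≠ x) : nvFlip x η v = η v := by
  simp [nvFlip_apply, h]

@[simp] lemma nvFlip_nvFlip (x : V) (η : V → Bool) : nvFlip x (nvFlip x η) = η := by
  funext v
  by_cases h : v = x <;> simp [nvFlip_apply, h]

lemma nvFlip_comm (x y : V) (η : V → Bool) : nvFlip x (nvFlip y η) = nvFlip y (nvFlip x η) := by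
  by_cases hxy : x = y
  · subst hxy; rfl
  · funext v
    by_cases hx : v = x <;> by_cases hy : v = y <;> simp_all [nvFlip_apply]

lemma nvFlip_ne_self (x : V) (η : V → Bool) : nvFlip x η ≠ η := by
  intro h; have := congrFun h x; simp at this

lemma nvFlip_injective (η : V → Bool) : Function.Injective (fun x => nvFlip x η) := by
  intro x y h
  by_contra hxy
  have := congrFun h x
  simp only [nvFlip_self, nvFlip_ne y η hxy] at this
  simp at this

end Flip

section Rates

variable {V : Type*} [Fintype V] [DecidableEq V] (G : SimpleGraph V) [DecidableRel G.Adj] {δ : ℝ}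

lemma card_disagree_le (x : V) (η : V → Bool) :
    ((Finset.univ.filter fun y => G.Adj x y ∧ η y ≠ η x).card : ℝ) ≤ (G.degree x : ℝ) := by
  rw [← SimpleGraph.card_neighborFinset_eq_degree]
  exact_mod_cast Finset.card_le_card (fun y hy => by
    simp only [Finset.mem_filter, Finset.mem_univ, true_and] at hy
    simpa [SimpleGraph.mem_neighborFinset] using hy.1)

lemma nvRate_nonneg (hδ : 0 < δ) (x : V) (η : V → Bool) : 0 ≤ nvRate G δ x η := by
  unfold nvRate
  have h1 : (0:ℝ) < 2 * δ + 1 := by linarith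
  positivity

lemma nvRate_le_one (hδ : 0 < δ) (hdeg : ∀ v, 1 ≤ G.degree v) (x : V) (η : V → Bool) :
    nvRate G δ x η ≤ 1 := by
  unfold nvRate
  have hd : (0:ℝ) < (G.degree x : ℝ) := by exact_mod_cast hdeg x
  have h1 : (0:ℝ) < 2 * δ + 1 := by linarith
  have h2 := card_disagree_le G x η
  have hq : (1 / (G.degree x : ℝ)) * ((Finset.univ.filter fun y => G.Adj x y ∧ η y ≠ η x).card : ℝ) ≤ 1 := by
    rw [one_div, inv_mul_le_one₀ hd]; exact h2
  have h3 : (1 / (2*δ+1)) * ((1:ℝ)+δ) ≤ 1 := by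
    rw [one_div_mul_eq_div, div_le_one h1]; linarith
  calc (1 / (2 * δ + 1)) * (_ + δ) ≤ (1 / (2*δ+1)) * (1+δ) := by
        apply mul_le_mul_of_nonneg_left (by linarith) (by positivity)
    _ ≤ 1 := h3

lemma nvRate_add_flip (hδ : 0 < δ) (hdeg : ∀ v, 1 ≤ G.degree v) (x : V) (η : V → Bool) :
    nvRate G δ x η + nvRate G δ x (nvFlip x η) = 1 := by
  have hd : (0:ℝ) < (G.degree x : ℝ) := by exact_mod_cast hdeg x
  have h1 : (0:ℝ) < 2 * δ + 1 := by linarith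
  have hcard : ((Finset.univ.filter fun y => G.Adj x y ∧ η y ≠ η x).card : ℝ)
      + ((Finset.univ.filter fun y => G.Adj x y ∧ nvFlip x η y ≠ nvFlip x η x).card : ℝ)
      = (G.degree x : ℝ) := by
    have h2 : (Finset.univ.filter fun y => G.Adj x y ∧ nvFlip x η y ≠ nvFlip x η x)
        = Finset.univ.filter fun y => G.Adj x y ∧ ¬(η y ≠ η x) := by
      apply Finset.filter_congr
      intro y _
      by_cases hadj : G.Adj x y
      · have hyx : y ≠ x := fun h => G.irrefl (h ▸ hadj)
        simp only [hadj, true_and, nvFlip_ne x η hyx, nvFlip_self]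
        cases η y <;> cases η x <;> simp
      · simp [hadj]
    rw [h2]
    have e1 : (Finset.univ.filter fun y => G.Adj x y ∧ η y ≠ η x)
        = (Finset.univ.filter fun y => G.Adj x y).filter (fun y => η y ≠ η x) := by
      rw [Finset.filter_filter]
    have e2 : (Finset.univ.filter fun y => G.Adj x y ∧ ¬(η y ≠ η x))
        = (Finset.univ.filter fun y => G.Adj x y).filter (fun y => ¬(η y ≠ η x)) := by
      rw [Finset.filter_filter]
    rw [e1, e2]
    have e3 : (Finset.univ.filter fun y => G.Adj x y) = G.neighborFinset x := by
      ext y; simp [SimpleGraph.mem_neighborFinset]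
    rw [← Nat.cast_add, Finset.card_filter_add_card_filter_not, e3,
      SimpleGraph.card_neighborFinset_eq_degree]
  set a := ((Finset.univ.filter fun y => G.Adj x y ∧ η y ≠ η x).card : ℝ) with ha
  set b := ((Finset.univ.filter fun y => G.Adj x y ∧ nvFlip x η y ≠ nvFlip x η x).card : ℝ) with hb
  unfold nvRate
  rw [← ha, ← hb]
  field_simp
  nlinarith [hcard]

lemma nvRate_flip_diff (hδ : 0 < δ) (hdeg : ∀ v, 1 ≤ G.degree v) (x y : V) (hxy : y ≠ x)
    (η : V → Bool) :
    |nvRate G δ y (nvFlip x η) - nvRate G δ y η| ≤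
      if G.Adj x y then 1 / ((2 * δ + 1) * (G.degree y : ℝ)) else 0 := by
  have hd : (0:ℝ) < (G.degree y : ℝ) := by exact_mod_cast hdeg y
  have h1 : (0:ℝ) < 2 * δ + 1 := by linarith
  set S : Finset V := Finset.univ.filter (fun z => G.Adj y z ∧ η z ≠ η y) with hS
  set S' : Finset V := Finset.univ.filter (fun z => G.Adj y z ∧ nvFlip x η z ≠ nvFlip x η y) with hS'
  have hfy : nvFlip x η y = η y := nvFlip_ne x η hxy
  have hdiff : nvRate G δ y (nvFlip x η) - nvRate G δ y η
      = (1 / (2 * δ + 1)) * ((1 / (G.degree y : ℝ)) * ((S'.card : ℝ) - (S.card : ℝ))) := by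
    unfold nvRate; rw [← hS, ← hS']; ring
  by_cases hadj : G.Adj x y
  · have herase : S.erase x = S'.erase x := by
      ext z
      simp only [Finset.mem_erase, hS, hS', Finset.mem_filter, Finset.mem_univ, true_and]
      constructor
      · rintro ⟨hzx, hz1, hz2⟩
        exact ⟨hzx, hz1, by rw [nvFlip_ne x η hzx, hfy]; exact hz2⟩
      · rintro ⟨hzx, hz1, hz2⟩
        exact ⟨hzx, hz1, by rw [nvFlip_ne x η hzx, hfy] at hz2; exact hz2⟩
    have key : ∀ T : Finset V, (T.erase x).card ≤ T.card ∧ T.card ≤ (T.erase x).card + 1 := by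
      intro T
      refine ⟨Finset.card_le_card (Finset.erase_subset _ _), ?_⟩
      calc T.card ≤ (insert x (T.erase x)).card := Finset.card_le_card (fun z hz => by
            by_cases hzx : z = x
            · simp [hzx]
            · exact Finset.mem_insert_of_mem (Finset.mem_erase.2 ⟨hzx, hz⟩))
        _ ≤ (T.erase x).card + 1 := Finset.card_insert_le _ _
    obtain ⟨h2, h3⟩ := key S
    obtain ⟨h4, h5⟩ := key S'
    rw [herase] at h2 h3
    have hcard : |(S'.card : ℝ) - (S.card : ℝ)| ≤ 1 := by
      rw [abs_sub_le_iff]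
      constructor <;>
      · have c1 : ((S'.erase x).card : ℝ) ≤ (S'.card : ℝ) := by exact_mod_cast h4
        have c2 : ((S.card : ℝ)) ≤ ((S'.erase x).card : ℝ) + 1 := by exact_mod_cast h3
        have c4 : ((S'.card : ℝ)) ≤ ((S'.erase x).card : ℝ) + 1 := by exact_mod_cast h5
        have c5 : ((S'.erase x).card : ℝ) ≤ (S.card : ℝ) := by exact_mod_cast h2
        linarith
    rw [hdiff, if_pos hadj, abs_mul, abs_mul]
    rw [abs_of_pos (by positivity : (0:ℝ) < 1 / (2*δ+1)),
      abs_of_pos (by positivity : (0:ℝ) < 1 / (G.degree y : ℝ))]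
    calc 1 / (2*δ+1) * (1 / (G.degree y : ℝ) * |(S'.card : ℝ) - (S.card : ℝ)|)
        ≤ 1 / (2*δ+1) * (1 / (G.degree y : ℝ) * 1) := by
          apply mul_le_mul_of_nonneg_left _ (by positivity)
          apply mul_le_mul_of_nonneg_left hcard (by positivity)
      _ = 1 / ((2 * δ + 1) * (G.degree y : ℝ)) := by rw [mul_one, one_div_mul_one_div]
  · have hSS : S = S' := by
      ext z
      simp only [hS, hS', Finset.mem_filter, Finset.mem_univ, true_and]
      by_cases hzx : z = x
      · subst hzx
        have : ¬ G.Adj y z := fun h => hadj (h.symm)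
        simp [this]
      · rw [nvFlip_ne x η hzx, hfy]
    rw [hdiff, if_neg hadj, hSS]
    simp

end Rates

section MulVec

variable {V : Type*} [Fintype V] [DecidableEq V] (G : SimpleGraph V) [DecidableRel G.Adj] {δ : ℝ}

lemma filter_nvFlip (x : V) (η : V → Bool) :
    (Finset.univ.filter fun v => η v ≠ nvFlip x η v) = {x} := by
  ext v
  simp only [Finset.mem_filter, Finset.mem_univ, true_and, Finset.mem_singleton]
  by_cases hv : v = x
  · subst hv; simp
  · rw [nvFlip_ne x η hv]; simp [hv]

lemma nvQ_flip (η : V → Bool) (x : V) : nvQ G δ η (nvFlip x η) = nvRate G δ x η := by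
  rw [nvQ]
  rw [if_neg (fun h => nvFlip_ne_self x η h.symm)]
  rw [filter_nvFlip]
  simp

lemma eq_nvFlip_of_card_one {η η' : V → Bool}
    (h : (Finset.univ.filter fun v => η v ≠ η' v).card = 1) :
    ∃ x, η' = nvFlip x η := by
  obtain ⟨x, hx⟩ := Finset.card_eq_one.1 h
  refine ⟨x, funext fun v => ?_⟩
  by_cases hv : v = x
  · subst hv
    have : v ∈ Finset.univ.filter fun w => η w ≠ η' w := by rw [hx]; simp
    simp only [Finset.mem_filter, Finset.mem_univ, true_and] at this
    rw [nvFlip_self]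
    revert this; cases η v <;> cases η' v <;> simp
  · have : v ∉ Finset.univ.filter fun w => η w ≠ η' w := by rw [hx]; simp [hv]
    simp only [Finset.mem_filter, Finset.mem_univ, true_and, not_not] at this
    rw [nvFlip_ne x η hv, this]

lemma nvQ_mulVec (h : (V → Bool) → ℝ) (η : V → Bool) :
    (Matrix.mulVec (nvQ G δ) h) η = ∑ x, nvRate G δ x η * (h (nvFlip x η) - h η) := by
  have expand : (Matrix.mulVec (nvQ G δ) h) η = ∑ η', nvQ G δ η η' * h η' := by
    simp [Matrix.mulVec, dotProduct]
  rw [expand]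
  have himg : (Finset.univ.image fun x => nvFlip x η) ⊆ Finset.univ.erase η := by
    intro η' hη'
    simp only [Finset.mem_image, Finset.mem_univ, true_and] at hη'
    obtain ⟨x, rfl⟩ := hη'
    exact Finset.mem_erase.2 ⟨nvFlip_ne_self x η, Finset.mem_univ _⟩
  have step1 : ∑ η', nvQ G δ η η' * h η'
      = nvQ G δ η η * h η + ∑ η' ∈ Finset.univ.erase η, nvQ G δ η η' * h η' := by
    rw [← Finset.sum_erase_add _ _ (Finset.mem_univ η)]; ring
  have step2 : ∑ η' ∈ Finset.univ.erase η, nvQ G δ η η' * h η'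
      = ∑ η' ∈ Finset.univ.image (fun x => nvFlip x η), nvQ G δ η η' * h η' := by
    symm
    apply Finset.sum_subset himg
    intro η' hmem hη'
    simp only [Finset.mem_image, Finset.mem_univ, true_and] at hη'
    have hne : η ≠ η' := fun hh => (Finset.mem_erase.1 (hh ▸ hmem)).1 rfl
    rw [nvQ, if_neg hne]
    rw [if_neg, zero_mul]
    intro hcard
    obtain ⟨x, rfl⟩ := eq_nvFlip_of_card_one hcard
    exact hη' ⟨x, rfl⟩
  have step3 : ∑ η' ∈ Finset.univ.image (fun x => nvFlip x η), nvQ G δ η η' * h η'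
      = ∑ x, nvRate G δ x η * h (nvFlip x η) := by
    rw [Finset.sum_image (fun x _ y _ hxy => nvFlip_injective η hxy)]
    exact Finset.sum_congr rfl fun x _ => by rw [nvQ_flip]
  have hdiag : nvQ G δ η η = -∑ x, nvRate G δ x η := by rw [nvQ, if_pos rfl]
  rw [step1, step2, step3, hdiag]
  simp only [mul_sub, Finset.sum_sub_distrib, neg_mul, Finset.sum_mul]
  ring

end MulVec
section Seminorm

variable {V : Type*} [Fintype V] [DecidableEq V]

noncomputable def mSup (x : V) (h : (V → Bool) → ℝ) : ℝ :=
  Finset.univ.sup' Finset.univ_nonempty fun η => |h (nvFlip x η) - h η|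

noncomputable def NN (h : (V → Bool) → ℝ) : ℝ := ∑ x : V, mSup x h

lemma abs_le_mSup (x : V) (h : (V → Bool) → ℝ) (η : V → Bool) :
    |h (nvFlip x η) - h η| ≤ mSup x h := by
  unfold mSup
  exact Finset.le_sup' (fun η => |h (nvFlip x η) - h η|) (Finset.mem_univ η)

lemma mSup_nonneg (x : V) (h : (V → Bool) → ℝ) : 0 ≤ mSup x h :=
  le_trans (abs_nonneg _) (abs_le_mSup x h (Classical.arbitrary _))

lemma mSup_le {x : V} {h : (V → Bool) → ℝ} {r : ℝ}
    (hr : ∀ η, |h (nvFlip x η) - h η| ≤ r) : mSup x h ≤ r :=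
  Finset.sup'_le _ _ fun η _ => hr η

lemma NN_nonneg (h : (V → Bool) → ℝ) : 0 ≤ NN h :=
  Finset.sum_nonneg fun x _ => mSup_nonneg x h

lemma mSup_smul_le (a : ℝ) (x : V) (h : (V → Bool) → ℝ) :
    mSup x (a • h) ≤ |a| * mSup x h := by
  apply mSup_le
  intro η
  have : (a • h) (nvFlip x η) - (a • h) η = a * (h (nvFlip x η) - h η) := by
    simp [mul_sub]
  rw [this, abs_mul]
  exact mul_le_mul_of_nonneg_left (abs_le_mSup x h η) (abs_nonneg a)

lemma NN_smul_le (a : ℝ) (h : (V → Bool) → ℝ) : NN (a • h) ≤ |a| * NN h := by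
  rw [NN, NN, Finset.mul_sum]
  exact Finset.sum_le_sum fun x _ => mSup_smul_le a x h

end Seminorm

section Dissipative

variable {V : Type*} [Fintype V] [DecidableEq V] (G : SimpleGraph V) [DecidableRel G.Adj] {δ : ℝ}

/-- the absorbed version of the generator, with nonnegative "off-diagonal" structure -/
noncomputable def nvB (G : SimpleGraph V) [DecidableRel G.Adj] (δ : ℝ) :
    Matrix (V → Bool) (V → Bool) ℝ :=
  nvQ G δ + ((Fintype.card V : ℝ) + 1) • (1 : Matrix (V → Bool) (V → Bool) ℝ)

lemma nvB_mulVec (h : (V → Bool) → ℝ) (η : V → Bool) :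
    (Matrix.mulVec (nvB G δ) h) η
      = ((Fintype.card V : ℝ) + 1) * h η + ∑ x, nvRate G δ x η * (h (nvFlip x η) - h η) := by
  rw [nvB, Matrix.add_mulVec, Matrix.smul_mulVec, Matrix.one_mulVec]
  rw [Pi.add_apply, Pi.smul_apply, smul_eq_mul, nvQ_mulVec]
  ring

lemma mSup_nvB (hδ : 0 < δ) (hdeg : ∀ v, 1 ≤ G.degree v) (h : (V → Bool) → ℝ) (x : V) :
    mSup x (Matrix.mulVec (nvB G δ) h)
      ≤ (Fintype.card V : ℝ) * mSup x h
        + ∑ y, (if G.Adj x y then 1 / ((2 * δ + 1) * (G.degree y : ℝ)) else 0) * mSup y h := by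
  apply mSup_le
  intro η
  set α : ℝ := (Fintype.card V : ℝ) + 1 with hα
  set c : V → (V → Bool) → ℝ := nvRate G δ with hc
  set g : ℝ := h (nvFlip x η) - h η with hg
  -- the exact rearrangement identity
  have identity : (Matrix.mulVec (nvB G δ) h) (nvFlip x η) - (Matrix.mulVec (nvB G δ) h) η
      = (α - 1 - ∑ y ∈ Finset.univ.erase x, c y (nvFlip x η)) * g
        + ∑ y ∈ Finset.univ.erase x,
            c y (nvFlip x η) * (h (nvFlip y (nvFlip x η)) - h (nvFlip y η))
        + ∑ y ∈ Finset.univ.erase x, (c y (nvFlip x η) - c y η) * (h (nvFlip y η) - h η) := by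
    rw [nvB_mulVec, nvB_mulVec]
    have split1 : ∑ y, c y (nvFlip x η) * (h (nvFlip y (nvFlip x η)) - h (nvFlip x η))
        = c x (nvFlip x η) * (h (nvFlip x (nvFlip x η)) - h (nvFlip x η))
          + ∑ y ∈ Finset.univ.erase x, c y (nvFlip x η) * (h (nvFlip y (nvFlip x η)) - h (nvFlip x η)) := by
      rw [← Finset.sum_erase_add _ _ (Finset.mem_univ x)]; ring
    have split2 : ∑ y, c y η * (h (nvFlip y η) - h η)
        = c x η * g + ∑ y ∈ Finset.univ.erase x, c y η * (h (nvFlip y η) - h η) := by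
      rw [← Finset.sum_erase_add _ _ (Finset.mem_univ x)]; ring
    rw [split1, split2, nvFlip_nvFlip]
    have hR2 : c x η + c x (nvFlip x η) = 1 := nvRate_add_flip G hδ hdeg x η
    have per_y : ∀ y ∈ Finset.univ.erase x,
        c y (nvFlip x η) * (h (nvFlip y (nvFlip x η)) - h (nvFlip x η))
          - c y η * (h (nvFlip y η) - h η)
        = c y (nvFlip x η) * (h (nvFlip y (nvFlip x η)) - h (nvFlip y η))
          - c y (nvFlip x η) * g
          + (c y (nvFlip x η) - c y η) * (h (nvFlip y η) - h η) := by
      intro y _; rw [hg]; ring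
    have sums : ∑ y ∈ Finset.univ.erase x,
          (c y (nvFlip x η) * (h (nvFlip y (nvFlip x η)) - h (nvFlip x η))
            - c y η * (h (nvFlip y η) - h η))
        = ∑ y ∈ Finset.univ.erase x,
            c y (nvFlip x η) * (h (nvFlip y (nvFlip x η)) - h (nvFlip y η))
          - (∑ y ∈ Finset.univ.erase x, c y (nvFlip x η)) * g
          + ∑ y ∈ Finset.univ.erase x, (c y (nvFlip x η) - c y η) * (h (nvFlip y η) - h η) := by
      rw [Finset.sum_congr rfl per_y]
      rw [Finset.sum_add_distrib, Finset.sum_sub_distrib, Finset.sum_mul]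
    have expand : α * h (nvFlip x η) + (c x (nvFlip x η) * (h η - h (nvFlip x η))
          + ∑ y ∈ Finset.univ.erase x, c y (nvFlip x η) * (h (nvFlip y (nvFlip x η)) - h (nvFlip x η)))
        - (α * h η + (c x η * g + ∑ y ∈ Finset.univ.erase x, c y η * (h (nvFlip y η) - h η)))
        = α * g - (c x η + c x (nvFlip x η)) * g
          + ∑ y ∈ Finset.univ.erase x,
              (c y (nvFlip x η) * (h (nvFlip y (nvFlip x η)) - h (nvFlip x η))
                - c y η * (h (nvFlip y η) - h η)) := by
      rw [hg, Finset.sum_sub_distrib]; ring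
    rw [expand, sums, hR2]
    ring
  rw [identity]
  -- now the triangle inequality estimates
  have hb1 : ∀ y ∈ Finset.univ.erase x,
      |h (nvFlip y (nvFlip x η)) - h (nvFlip y η)| ≤ mSup x h := by
    intro y _
    rw [nvFlip_comm]
    exact abs_le_mSup x h (nvFlip y η)
  have hc_nonneg : ∀ y, 0 ≤ c y (nvFlip x η) := fun y => nvRate_nonneg G hδ y _
  have hS_le : ∑ y ∈ Finset.univ.erase x, c y (nvFlip x η) ≤ (Fintype.card V : ℝ) - 1 := by
    calc ∑ y ∈ Finset.univ.erase x, c y (nvFlip x η)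
        ≤ ∑ _y ∈ Finset.univ.erase x, (1:ℝ) :=
          Finset.sum_le_sum fun y _ => nvRate_le_one G hδ hdeg y _
      _ = ((Finset.univ.erase x).card : ℝ) := by simp
      _ = (Fintype.card V : ℝ) - 1 := by
          rw [Finset.card_erase_of_mem (Finset.mem_univ x), Finset.card_univ]
          have : 1 ≤ Fintype.card V := Fintype.card_pos_iff.2 ⟨x⟩
          rw [Nat.cast_sub this, Nat.cast_one]
  set S : ℝ := ∑ y ∈ Finset.univ.erase x, c y (nvFlip x η) with hSdef
  have hS0 : 0 ≤ S := Finset.sum_nonneg fun y _ => hc_nonneg y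
  have hcoef : 0 ≤ α - 1 - S := by
    rw [hα]; linarith
  have t1 : |(α - 1 - S) * g| ≤ (α - 1 - S) * mSup x h := by
    rw [abs_mul, abs_of_nonneg hcoef]
    exact mul_le_mul_of_nonneg_left (abs_le_mSup x h η) hcoef
  have t2 : |∑ y ∈ Finset.univ.erase x,
        c y (nvFlip x η) * (h (nvFlip y (nvFlip x η)) - h (nvFlip y η))| ≤ S * mSup x h := by
    calc |∑ y ∈ Finset.univ.erase x,
          c y (nvFlip x η) * (h (nvFlip y (nvFlip x η)) - h (nvFlip y η))|
        ≤ ∑ y ∈ Finset.univ.erase x,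
            |c y (nvFlip x η) * (h (nvFlip y (nvFlip x η)) - h (nvFlip y η))| :=
          Finset.abs_sum_le_sum_abs _ _
      _ ≤ ∑ y ∈ Finset.univ.erase x, c y (nvFlip x η) * mSup x h := by
          apply Finset.sum_le_sum
          intro y hy
          rw [abs_mul, abs_of_nonneg (hc_nonneg y)]
          exact mul_le_mul_of_nonneg_left (hb1 y hy) (hc_nonneg y)
      _ = S * mSup x h := by rw [hSdef, Finset.sum_mul]
  have t3 : |∑ y ∈ Finset.univ.erase x, (c y (nvFlip x η) - c y η) * (h (nvFlip y η) - h η)|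
      ≤ ∑ y, (if G.Adj x y then 1 / ((2 * δ + 1) * (G.degree y : ℝ)) else 0) * mSup y h := by
    calc |∑ y ∈ Finset.univ.erase x, (c y (nvFlip x η) - c y η) * (h (nvFlip y η) - h η)|
        ≤ ∑ y ∈ Finset.univ.erase x, |(c y (nvFlip x η) - c y η) * (h (nvFlip y η) - h η)| :=
          Finset.abs_sum_le_sum_abs _ _
      _ ≤ ∑ y ∈ Finset.univ.erase x,
            (if G.Adj x y then 1 / ((2 * δ + 1) * (G.degree y : ℝ)) else 0) * mSup y h := by
          apply Finset.sum_le_sum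
          intro y hy
          rw [abs_mul]
          have hyx : y ≠ x := (Finset.mem_erase.1 hy).1
          apply mul_le_mul (nvRate_flip_diff G hδ hdeg x y hyx η) (abs_le_mSup y h η)
            (abs_nonneg _)
          · split <;> positivity
      _ ≤ ∑ y, (if G.Adj x y then 1 / ((2 * δ + 1) * (G.degree y : ℝ)) else 0) * mSup y h := by
          apply Finset.sum_le_sum_of_subset_of_nonneg (Finset.erase_subset _ _)
          intro y _ _
          have : (0:ℝ) ≤ if G.Adj x y then 1 / ((2 * δ + 1) * (G.degree y : ℝ)) else 0 := by
            split <;> positivity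
          exact mul_nonneg this (mSup_nonneg y h)
  calc |(α - 1 - S) * g
        + ∑ y ∈ Finset.univ.erase x,
            c y (nvFlip x η) * (h (nvFlip y (nvFlip x η)) - h (nvFlip y η))
        + ∑ y ∈ Finset.univ.erase x, (c y (nvFlip x η) - c y η) * (h (nvFlip y η) - h η)|
      ≤ |(α - 1 - S) * g|
        + |∑ y ∈ Finset.univ.erase x,
            c y (nvFlip x η) * (h (nvFlip y (nvFlip x η)) - h (nvFlip y η))|
        + |∑ y ∈ Finset.univ.erase x, (c y (nvFlip x η) - c y η) * (h (nvFlip y η) - h η)| := by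
        exact (abs_add_le _ _).trans (by gcongr; exact abs_add_le _ _)
    _ ≤ (α - 1 - S) * mSup x h + S * mSup x h
        + ∑ y, (if G.Adj x y then 1 / ((2 * δ + 1) * (G.degree y : ℝ)) else 0) * mSup y h := by
        gcongr
    _ ≤ (Fintype.card V : ℝ) * mSup x h
        + ∑ y, (if G.Adj x y then 1 / ((2 * δ + 1) * (G.degree y : ℝ)) else 0) * mSup y h := by
        have : (α - 1 - S) * mSup x h + S * mSup x h = (α - 1) * mSup x h := by ring
        rw [this, hα]
        simp

end Dissipative
section NNBound

variable {V : Type*} [Fintype V] [DecidableEq V] (G : SimpleGraph V) [DecidableRel G.Adj] {δ : ℝ}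

lemma sum_weights (hδ : 0 < δ) (hdeg : ∀ v, 1 ≤ G.degree v) (y : V) :
    ∑ x, (if G.Adj x y then 1 / ((2 * δ + 1) * (G.degree y : ℝ)) else 0) = 1 / (2 * δ + 1) := by
  have hd : (0:ℝ) < (G.degree y : ℝ) := by exact_mod_cast hdeg y
  have h1 : (0:ℝ) < 2 * δ + 1 := by linarith
  rw [← Finset.sum_filter]
  have e : Finset.univ.filter (fun x => G.Adj x y) = G.neighborFinset y := by
    ext z; simp [SimpleGraph.mem_neighborFinset, SimpleGraph.adj_comm]
  rw [e, Finset.sum_const, SimpleGraph.card_neighborFinset_eq_degree, nsmul_eq_mul]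
  field_simp

lemma NN_nvB_le (hδ : 0 < δ) (hdeg : ∀ v, 1 ≤ G.degree v) (h : (V → Bool) → ℝ) :
    NN (Matrix.mulVec (nvB G δ) h)
      ≤ ((Fintype.card V : ℝ) + 1 / (2 * δ + 1)) * NN h := by
  have step : NN (Matrix.mulVec (nvB G δ) h)
      ≤ ∑ x, ((Fintype.card V : ℝ) * mSup x h
          + ∑ y, (if G.Adj x y then 1 / ((2 * δ + 1) * (G.degree y : ℝ)) else 0) * mSup y h) :=
    Finset.sum_le_sum fun x _ => mSup_nvB G hδ hdeg h x
  rw [Finset.sum_add_distrib] at step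
  rw [Finset.sum_comm] at step
  simp only [← Finset.sum_mul] at step
  calc NN (Matrix.mulVec (nvB G δ) h)
      ≤ ∑ x, (Fintype.card V : ℝ) * mSup x h
        + ∑ y, (∑ x, if G.Adj x y then 1 / ((2 * δ + 1) * (G.degree y : ℝ)) else 0) * mSup y h :=
        step
    _ = (Fintype.card V : ℝ) * NN h + ∑ y, (1 / (2 * δ + 1)) * mSup y h := by
        rw [← Finset.mul_sum, NN]
        congr 1
        exact Finset.sum_congr rfl fun y _ => by rw [sum_weights G hδ hdeg y]
    _ = ((Fintype.card V : ℝ) + 1 / (2 * δ + 1)) * NN h := by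
        rw [← Finset.mul_sum, ← NN]; ring

lemma NN_nvB_pow_le (hδ : 0 < δ) (hdeg : ∀ v, 1 ≤ G.degree v) (h : (V → Bool) → ℝ) (k : ℕ) :
    NN (Matrix.mulVec ((nvB G δ) ^ k) h)
      ≤ ((Fintype.card V : ℝ) + 1 / (2 * δ + 1)) ^ k * NN h := by
  induction k with
  | zero => simp [Matrix.one_mulVec]
  | succ k ih =>
    have h1 : (0:ℝ) < 2 * δ + 1 := by linarith
    have hβ : (0:ℝ) ≤ (Fintype.card V : ℝ) + 1 / (2 * δ + 1) := by positivity
    have : (nvB G δ) ^ (k+1) = (nvB G δ) * (nvB G δ) ^ k := by rw [pow_succ']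
    rw [this, ← Matrix.mulVec_mulVec]
    calc NN (Matrix.mulVec (nvB G δ) (Matrix.mulVec ((nvB G δ) ^ k) h))
        ≤ ((Fintype.card V : ℝ) + 1 / (2 * δ + 1)) * NN (Matrix.mulVec ((nvB G δ) ^ k) h) :=
          NN_nvB_le G hδ hdeg _
      _ ≤ ((Fintype.card V : ℝ) + 1 / (2 * δ + 1))
            * (((Fintype.card V : ℝ) + 1 / (2 * δ + 1)) ^ k * NN h) :=
          mul_le_mul_of_nonneg_left ih hβ
      _ = ((Fintype.card V : ℝ) + 1 / (2 * δ + 1)) ^ (k+1) * NN h := by ring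

end NNBound
section Analytic

open NormedSpace

variable {V : Type*} [Fintype V] [DecidableEq V] (G : SimpleGraph V) [DecidableRel G.Adj] {δ : ℝ}

lemma continuous_NN : Continuous (fun h : (V → Bool) → ℝ => NN h) := by
  apply continuous_finset_sum
  intro x _
  unfold mSup
  exact Continuous.finset_sup'_apply Finset.univ_nonempty fun η _ =>
    ((continuous_apply (nvFlip x η)).sub (continuous_apply η)).abs

lemma continuous_mulVec_left (h : (V → Bool) → ℝ) :
    Continuous (fun M : Matrix (V → Bool) (V → Bool) ℝ => Matrix.mulVec M h) := by
  apply continuous_pi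
  intro η
  simp only [Matrix.mulVec, dotProduct]
  apply continuous_finset_sum
  intro σ _
  exact ((continuous_id.matrix_elem η σ).mul continuous_const)

lemma continuous_vecMul_right (μ : (V → Bool) → ℝ) :
    Continuous (fun M : Matrix (V → Bool) (V → Bool) ℝ => Matrix.vecMul μ M) := by
  apply continuous_pi
  intro σ
  simp only [Matrix.vecMul, dotProduct]
  apply continuous_finset_sum
  intro τ _
  exact continuous_const.mul ((continuous_apply σ).comp (continuous_apply τ))

lemma hasSum_exp_mulVec (M : Matrix (V → Bool) (V → Bool) ℝ) (h : (V → Bool) → ℝ) :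
    HasSum (fun k : ℕ => ((Nat.factorial k : ℝ))⁻¹ • Matrix.mulVec (M ^ k) h)
      (Matrix.mulVec (NormedSpace.exp M) h) := by
  letI : SeminormedRing (Matrix (V → Bool) (V → Bool) ℝ) := Matrix.linftyOpSemiNormedRing
  letI : NormedRing (Matrix (V → Bool) (V → Bool) ℝ) := Matrix.linftyOpNormedRing
  letI : NormedAlgebra ℝ (Matrix (V → Bool) (V → Bool) ℝ) := Matrix.linftyOpNormedAlgebra
  have hs := NormedSpace.exp_series_hasSum_exp' (𝕂 := ℝ) M
  have hmap := hs.map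
    (AddMonoidHom.mk' (fun N : Matrix (V → Bool) (V → Bool) ℝ => Matrix.mulVec N h)
      (fun N N' => Matrix.add_mulVec N N' h))
    (continuous_mulVec_left h)
  have hmap2 : HasSum
      (fun k : ℕ => Matrix.mulVec (((Nat.factorial k : ℝ))⁻¹ • M ^ k) h)
      (Matrix.mulVec (NormedSpace.exp M) h) := hmap
  have hfun : (fun k : ℕ => Matrix.mulVec (((Nat.factorial k : ℝ))⁻¹ • M ^ k) h)
      = fun k : ℕ => ((Nat.factorial k : ℝ))⁻¹ • Matrix.mulVec (M ^ k) h := by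
    funext k
    rw [Matrix.smul_mulVec]
  rwa [hfun] at hmap2

lemma vecMul_smul_matrix (v : (V → Bool) → ℝ) (a : ℝ) (M : Matrix (V → Bool) (V → Bool) ℝ) :
    Matrix.vecMul v (a • M) = a • Matrix.vecMul v M := by
  funext σ
  simp only [Matrix.vecMul, dotProduct, Pi.smul_apply, Matrix.smul_apply, smul_eq_mul,
    Finset.mul_sum]
  exact Finset.sum_congr rfl fun τ _ => by ring

lemma vecMul_exp_of_stationary (μ : (V → Bool) → ℝ)
    (M : Matrix (V → Bool) (V → Bool) ℝ) (hμ : Matrix.vecMul μ M = 0) :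
    Matrix.vecMul μ (NormedSpace.exp M) = μ := by
  letI : SeminormedRing (Matrix (V → Bool) (V → Bool) ℝ) := Matrix.linftyOpSemiNormedRing
  letI : NormedRing (Matrix (V → Bool) (V → Bool) ℝ) := Matrix.linftyOpNormedRing
  letI : NormedAlgebra ℝ (Matrix (V → Bool) (V → Bool) ℝ) := Matrix.linftyOpNormedAlgebra
  have hs := NormedSpace.exp_series_hasSum_exp' (𝕂 := ℝ) M
  have hmap := hs.map
    (AddMonoidHom.mk' (fun N : Matrix (V → Bool) (V → Bool) ℝ => Matrix.vecMul μ N)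
      (fun N N' => by
        show Matrix.vecMul μ (N + N') = Matrix.vecMul μ N + Matrix.vecMul μ N'
        rw [Matrix.vecMul_add]))
    (continuous_vecMul_right μ)
  have hmap2 : HasSum
      (fun k : ℕ => Matrix.vecMul μ (((Nat.factorial k : ℝ))⁻¹ • M ^ k))
      (Matrix.vecMul μ (NormedSpace.exp M)) := hmap
  have hfun : (fun k : ℕ => Matrix.vecMul μ (((Nat.factorial k : ℝ))⁻¹ • M ^ k))
      = fun k : ℕ => if k = 0 then μ else 0 := by
    funext k
    rw [vecMul_smul_matrix]
    cases k with
    | zero => simp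
    | succ k =>
      have hstep : M ^ (k + 1) = M * M ^ k := pow_succ' M k
      rw [hstep, ← Matrix.vecMul_vecMul, hμ, Matrix.zero_vecMul]
      simp
  rw [hfun] at hmap2
  exact (HasSum.unique hmap2 (hasSum_ite_eq 0 μ))

lemma exp_tQ_eq (t : ℝ) :
    NormedSpace.exp (t • nvQ G δ)
      = Real.exp (-(t * ((Fintype.card V : ℝ) + 1))) • NormedSpace.exp (t • nvB G δ) := by
  letI : SeminormedRing (Matrix (V → Bool) (V → Bool) ℝ) := Matrix.linftyOpSemiNormedRing
  letI : NormedRing (Matrix (V → Bool) (V → Bool) ℝ) := Matrix.linftyOpNormedRing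
  letI : NormedAlgebra ℝ (Matrix (V → Bool) (V → Bool) ℝ) := Matrix.linftyOpNormedAlgebra
  have hdecomp : t • nvQ G δ = t • nvB G δ
      + (-(t * ((Fintype.card V : ℝ) + 1))) • (1 : Matrix (V → Bool) (V → Bool) ℝ) := by
    rw [nvB, smul_add, smul_smul, add_assoc, ← add_smul]
    simp
  rw [hdecomp]
  have hcomm : Commute (t • nvB G δ)
      ((-(t * ((Fintype.card V : ℝ) + 1))) • (1 : Matrix (V → Bool) (V → Bool) ℝ)) :=
    ((Commute.one_right (t • nvB G δ))).smul_right _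
  erw [NormedSpace.exp_add_of_commute_of_mem_ball (𝕂 := ℝ) hcomm
    ((NormedSpace.expSeries_radius_eq_top ℝ (Matrix (V → Bool) (V → Bool) ℝ)).symm ▸ edist_lt_top _ _)
    ((NormedSpace.expSeries_radius_eq_top ℝ (Matrix (V → Bool) (V → Bool) ℝ)).symm ▸ edist_lt_top _ _)]
  have h1 : ((-(t * ((Fintype.card V : ℝ) + 1))) • (1 : Matrix (V → Bool) (V → Bool) ℝ))
      = algebraMap ℝ (Matrix (V → Bool) (V → Bool) ℝ) (-(t * ((Fintype.card V : ℝ) + 1))) := by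
    rw [Algebra.algebraMap_eq_smul_one]
  rw [h1, ← NormedSpace.algebraMap_exp_comm]
  rw [Algebra.algebraMap_eq_smul_one]
  rw [← Real.exp_eq_exp_ℝ]
  rw [mul_smul_comm, mul_one]
  rfl

end Analytic
section Contraction

variable {V : Type*} [Fintype V] [DecidableEq V] (G : SimpleGraph V) [DecidableRel G.Adj] {δ : ℝ}

lemma mSup_zero (x : V) : mSup x (0 : (V → Bool) → ℝ) = 0 :=
  le_antisymm (mSup_le fun η => by simp) (mSup_nonneg x 0)

lemma mSup_add_le (x : V) (f g : (V → Bool) → ℝ) : mSup x (f + g) ≤ mSup x f + mSup x g := by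
  apply mSup_le
  intro η
  have : (f + g) (nvFlip x η) - (f + g) η = (f (nvFlip x η) - f η) + (g (nvFlip x η) - g η) := by
    simp; ring
  rw [this]
  exact (abs_add_le _ _).trans (add_le_add (abs_le_mSup x f η) (abs_le_mSup x g η))

lemma NN_zero : NN (0 : (V → Bool) → ℝ) = 0 := by
  rw [NN]
  exact Finset.sum_eq_zero fun x _ => mSup_zero x

lemma NN_add_le (f g : (V → Bool) → ℝ) : NN (f + g) ≤ NN f + NN g := by
  rw [NN, NN, NN, ← Finset.sum_add_distrib]
  exact Finset.sum_le_sum fun x _ => mSup_add_le x f g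

lemma NN_finset_sum_le {ι : Type*} (F : Finset ι) (v : ι → (V → Bool) → ℝ) :
    NN (∑ k ∈ F, v k) ≤ ∑ k ∈ F, NN (v k) := by
  induction F using Finset.cons_induction with
  | empty => simp [NN_zero]
  | cons a F ha ih =>
    rw [Finset.sum_cons, Finset.sum_cons]
    exact (NN_add_le _ _).trans (add_le_add le_rfl ih)

lemma NN_exp_le (hδ : 0 < δ) (hdeg : ∀ v, 1 ≤ G.degree v) (t : ℝ) (ht : 0 ≤ t)
    (h : (V → Bool) → ℝ) :
    NN (Matrix.mulVec (NormedSpace.exp (t • nvQ G δ)) h)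
      ≤ Real.exp (-(2 * δ / (2 * δ + 1)) * t) * NN h := by
  have h1 : (0:ℝ) < 2 * δ + 1 := by linarith
  set β : ℝ := (Fintype.card V : ℝ) + 1 / (2 * δ + 1) with hβdef
  have hβ0 : (0:ℝ) ≤ β := by positivity
  -- the comparison scalar series
  have hbscalar : HasSum (fun k : ℕ => ((Nat.factorial k : ℝ))⁻¹ • (t * β) ^ k)
      (Real.exp (t * β)) := by
    rw [Real.exp_eq_exp_ℝ]
    exact NormedSpace.exp_series_hasSum_exp' (t * β)
  have hb := hbscalar.mul_right (NN h)
  -- the vector series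
  have hs := hasSum_exp_mulVec (t • nvB G δ) h
  have key : NN (Matrix.mulVec (NormedSpace.exp (t • nvB G δ)) h)
      ≤ Real.exp (t * β) * NN h := by
    refine le_of_tendsto_of_tendsto' ((continuous_NN.tendsto _).comp hs) hb ?_
    intro F
    simp only [Function.comp_apply]
    refine (NN_finset_sum_le F _).trans ?_
    apply Finset.sum_le_sum
    intro k _
    have hterm : ((Nat.factorial k : ℝ))⁻¹ • Matrix.mulVec ((t • nvB G δ) ^ k) h
        = (((Nat.factorial k : ℝ))⁻¹ * t ^ k) • Matrix.mulVec ((nvB G δ) ^ k) h := by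
      rw [smul_pow, Matrix.smul_mulVec, smul_smul]
    rw [hterm]
    have hfac : (0:ℝ) ≤ ((Nat.factorial k : ℝ))⁻¹ := by positivity
    have htk : (0:ℝ) ≤ t ^ k := pow_nonneg ht k
    calc NN ((((Nat.factorial k : ℝ))⁻¹ * t ^ k) • Matrix.mulVec ((nvB G δ) ^ k) h)
        ≤ |((Nat.factorial k : ℝ))⁻¹ * t ^ k| * NN (Matrix.mulVec ((nvB G δ) ^ k) h) :=
          NN_smul_le _ _
      _ = ((Nat.factorial k : ℝ))⁻¹ * t ^ k * NN (Matrix.mulVec ((nvB G δ) ^ k) h) := by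
          rw [abs_of_nonneg (mul_nonneg hfac htk)]
      _ ≤ ((Nat.factorial k : ℝ))⁻¹ * t ^ k * (β ^ k * NN h) := by
          apply mul_le_mul_of_nonneg_left (NN_nvB_pow_le G hδ hdeg h k)
            (mul_nonneg hfac htk)
      _ = ((Nat.factorial k : ℝ))⁻¹ • (t * β) ^ k * NN h := by
          rw [smul_eq_mul, mul_pow]; ring
  rw [exp_tQ_eq, Matrix.smul_mulVec]
  have hr : (0:ℝ) < Real.exp (-(t * ((Fintype.card V : ℝ) + 1))) := Real.exp_pos _
  calc NN (Real.exp (-(t * ((Fintype.card V : ℝ) + 1)))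
          • Matrix.mulVec (NormedSpace.exp (t • nvB G δ)) h)
      ≤ |Real.exp (-(t * ((Fintype.card V : ℝ) + 1)))|
          * NN (Matrix.mulVec (NormedSpace.exp (t • nvB G δ)) h) := NN_smul_le _ _
    _ = Real.exp (-(t * ((Fintype.card V : ℝ) + 1)))
          * NN (Matrix.mulVec (NormedSpace.exp (t • nvB G δ)) h) := by
        rw [abs_of_pos hr]
    _ ≤ Real.exp (-(t * ((Fintype.card V : ℝ) + 1))) * (Real.exp (t * β) * NN h) :=
        mul_le_mul_of_nonneg_left key hr.le
    _ = Real.exp (-(2 * δ / (2 * δ + 1)) * t) * NN h := by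
        rw [← mul_assoc, ← Real.exp_add]
        congr 2
        rw [hβdef]
        field_simp
        ring

end Contraction
section Telescope

variable {V : Type*} [Fintype V] [DecidableEq V]

lemma abs_sub_le_sum_mSup (F : (V → Bool) → ℝ) :
    ∀ (n : ℕ) (η τ : V → Bool), (Finset.univ.filter fun v => η v ≠ τ v).card = n →
      |F η - F τ| ≤ ∑ x ∈ Finset.univ.filter (fun v => η v ≠ τ v), mSup x F := by
  intro n
  induction n with
  | zero =>
    intro η τ hcard
    have hempty : (Finset.univ.filter fun v => η v ≠ τ v) = ∅ := Finset.card_eq_zero.1 hcard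
    have : η = τ := by
      funext v
      by_contra hv
      have : v ∈ Finset.univ.filter fun v => η v ≠ τ v := by simp [hv]
      rw [hempty] at this
      exact absurd this (Finset.notMem_empty v)
    rw [this]
    simp
  | succ n ih =>
    intro η τ hcard
    have hne : (Finset.univ.filter fun v => η v ≠ τ v).Nonempty :=
      Finset.card_pos.1 (by omega)
    obtain ⟨x, hx⟩ := hne
    have hx' : η x ≠ τ x := (Finset.mem_filter.1 hx).2
    have hfix : nvFlip x η x = τ x := by
      rw [nvFlip_self]
      revert hx'; cases η x <;> cases τ x <;> simp
    have hfilter : (Finset.univ.filter fun v => nvFlip x η v ≠ τ v)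
        = (Finset.univ.filter fun v => η v ≠ τ v).erase x := by
      ext v
      simp only [Finset.mem_filter, Finset.mem_univ, true_and, Finset.mem_erase]
      by_cases hv : v = x
      · subst hv; simp [hfix, hx']
      · rw [nvFlip_ne x η hv]; tauto
    have hcard' : (Finset.univ.filter fun v => nvFlip x η v ≠ τ v).card = n := by
      rw [hfilter, Finset.card_erase_of_mem hx, hcard]
      omega
    have step := ih (nvFlip x η) τ hcard'
    rw [hfilter] at step
    calc |F η - F τ| = |(F η - F (nvFlip x η)) + (F (nvFlip x η) - F τ)| := by ring_nf
      _ ≤ |F η - F (nvFlip x η)| + |F (nvFlip x η) - F τ| := abs_add_le _ _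
      _ ≤ mSup x F + ∑ y ∈ (Finset.univ.filter fun v => η v ≠ τ v).erase x, mSup y F := by
          apply add_le_add _ step
          rw [abs_sub_comm]
          exact abs_le_mSup x F η
      _ = ∑ y ∈ Finset.univ.filter (fun v => η v ≠ τ v), mSup y F := by
          rw [add_comm]
          exact Finset.sum_erase_add _ _ hx

lemma abs_sub_le_NN (F : (V → Bool) → ℝ) (η τ : V → Bool) : |F η - F τ| ≤ NN F := by
  refine (abs_sub_le_sum_mSup F _ η τ rfl).trans ?_
  rw [NN]
  exact Finset.sum_le_sum_of_subset_of_nonneg (Finset.filter_subset _ _)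
    fun x _ _ => mSup_nonneg x F

end Telescope
/-- The noisy voter model mixes in time `O(log n)`: for every `ε ∈ (0,1)`, once
`t ≥ ((2δ+1)/(2δ))·log(n/ε)` we have `‖P_t(η,·) − μ‖ ≤ ε` for every initial configuration `η`
and every stationary distribution `μ`; in particular
`t_mix(ε) ≤ ((2δ+1)/(2δ))·log(n/ε)`. -/
theorem noisy_voter_mixing_time_log
    {V : Type*} [Fintype V] [DecidableEq V] (δ : ℝ) (hδ : 0 < δ)
    (G : SimpleGraph V) [DecidableRel G.Adj] (hdeg : ∀ v, 1 ≤ G.degree v)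
    (μ : (V → Bool) → ℝ) (hμ0 : ∀ σ, 0 ≤ μ σ) (hμ1 : ∑ σ, μ σ = 1)
    (hstat : Matrix.vecMul μ (nvQ G δ) = 0)
    (ε : ℝ) (hε : ε ∈ Set.Ioo (0 : ℝ) 1) :
    (∀ t : ℝ, ((2 * δ + 1) / (2 * δ)) * Real.log ((Fintype.card V : ℝ) / ε) ≤ t →
      ∀ η : V → Bool,
        tvDist (fun σ => NormedSpace.exp (t • nvQ G δ) η σ) μ ≤ ε) ∧
    sInf {t : ℝ | 0 ≤ t ∧ ∀ η : V → Bool,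
        tvDist (fun σ => NormedSpace.exp (t • nvQ G δ) η σ) μ ≤ ε} ≤
      ((2 * δ + 1) / (2 * δ)) * Real.log ((Fintype.card V : ℝ) / ε) := by
  obtain ⟨hε0, hε1⟩ := hε
  have h1 : (0:ℝ) < 2 * δ + 1 := by linarith
  have hδ2 : (0:ℝ) < 2 * δ := by linarith
  have hc : (0:ℝ) < 2 * δ / (2 * δ + 1) := by positivity
  have hn0 : (0:ℝ) ≤ (Fintype.card V : ℝ) := by positivity
  have hlog : 0 ≤ Real.log ((Fintype.card V : ℝ) / ε) := by
    rcases eq_or_lt_of_le hn0 with h0 | hpos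
    · rw [← h0]; simp
    · apply Real.log_nonneg
      have hn1 : (1:ℝ) ≤ (Fintype.card V : ℝ) := by
        have : 1 ≤ Fintype.card V := by exact_mod_cast Nat.cast_pos.1 hpos
        exact_mod_cast this
      rw [le_div_iff₀ hε0]; nlinarith
  have hT0 : 0 ≤ ((2 * δ + 1) / (2 * δ)) * Real.log ((Fintype.card V : ℝ) / ε) :=
    mul_nonneg (by positivity) hlog
  have main : ∀ t : ℝ, ((2 * δ + 1) / (2 * δ)) * Real.log ((Fintype.card V : ℝ) / ε) ≤ t →
      ∀ η : V → Bool,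
        tvDist (fun σ => NormedSpace.exp (t • nvQ G δ) η σ) μ ≤ ε := by
    intro t ht η
    have ht0 : 0 ≤ t := hT0.trans ht
    have hstat2 : Matrix.vecMul μ (NormedSpace.exp (t • nvQ G δ)) = μ := by
      apply vecMul_exp_of_stationary
      rw [vecMul_smul_matrix, hstat]
      simp
    have hexp : Real.exp (-(2 * δ / (2 * δ + 1)) * t) * (Fintype.card V : ℝ) ≤ ε := by
      rcases eq_or_lt_of_le hn0 with h0 | hpos
      · rw [← h0, mul_zero]; exact hε0.le
      · have hct : Real.log ((Fintype.card V : ℝ) / ε) ≤ 2 * δ / (2 * δ + 1) * t := by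
          calc Real.log ((Fintype.card V : ℝ) / ε)
              = 2 * δ / (2 * δ + 1)
                * (((2 * δ + 1) / (2 * δ)) * Real.log ((Fintype.card V : ℝ) / ε)) := by
                rw [← mul_assoc]
                field_simp
            _ ≤ 2 * δ / (2 * δ + 1) * t := mul_le_mul_of_nonneg_left ht hc.le
        have hkey : Real.exp (-(2 * δ / (2 * δ + 1)) * t) ≤ ε / (Fintype.card V : ℝ) := by
          rw [← Real.exp_log (div_pos hε0 hpos)]
          apply Real.exp_le_exp.2
          rw [Real.log_div hε0.ne' hpos.ne']
          rw [Real.log_div hpos.ne' hε0.ne'] at hct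
          linarith
        calc Real.exp (-(2 * δ / (2 * δ + 1)) * t) * (Fintype.card V : ℝ)
            ≤ (ε / (Fintype.card V : ℝ)) * (Fintype.card V : ℝ) :=
              mul_le_mul_of_nonneg_right hkey hpos.le
          _ = ε := by field_simp
    unfold tvDist
    apply Finset.sup'_le
    intro A hA
    set f : (V → Bool) → ℝ := fun σ => if σ ∈ A then (1:ℝ) else 0 with hf
    set F : (V → Bool) → ℝ := Matrix.mulVec (NormedSpace.exp (t • nvQ G δ)) f with hF
    have hFeq : ∀ τ, F τ = ∑ σ ∈ A, NormedSpace.exp (t • nvQ G δ) τ σ := by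
      intro τ
      rw [hF]
      simp only [Matrix.mulVec, dotProduct, hf, mul_ite, mul_one, mul_zero]
      rw [Finset.sum_ite_mem, Finset.univ_inter]
    have hμA : ∑ σ ∈ A, μ σ = ∑ τ, μ τ * F τ := by
      have hrow : ∀ σ, μ σ = ∑ τ, μ τ * NormedSpace.exp (t • nvQ G δ) τ σ := by
        intro σ
        have hcol := congrFun hstat2 σ
        rw [Matrix.vecMul, dotProduct] at hcol
        exact hcol.symm
      calc ∑ σ ∈ A, μ σ = ∑ σ ∈ A, ∑ τ, μ τ * NormedSpace.exp (t • nvQ G δ) τ σ :=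
            Finset.sum_congr rfl fun σ _ => hrow σ
        _ = ∑ τ, ∑ σ ∈ A, μ τ * NormedSpace.exp (t • nvQ G δ) τ σ := Finset.sum_comm
        _ = ∑ τ, μ τ * F τ := by
            refine Finset.sum_congr rfl fun τ _ => ?_
            rw [hFeq τ, Finset.mul_sum]
    have hdiff : ∑ σ ∈ A, NormedSpace.exp (t • nvQ G δ) η σ - ∑ σ ∈ A, μ σ
        = ∑ τ, μ τ * (F η - F τ) := by
      rw [hμA, ← hFeq η]
      simp only [mul_sub, Finset.sum_sub_distrib]
      rw [← Finset.sum_mul, hμ1, one_mul]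
    have habs : |∑ σ ∈ A, NormedSpace.exp (t • nvQ G δ) η σ - ∑ σ ∈ A, μ σ| ≤ NN F := by
      rw [hdiff]
      calc |∑ τ, μ τ * (F η - F τ)| ≤ ∑ τ, |μ τ * (F η - F τ)| :=
            Finset.abs_sum_le_sum_abs _ _
        _ ≤ ∑ τ, μ τ * NN F := by
            apply Finset.sum_le_sum
            intro τ _
            rw [abs_mul, abs_of_nonneg (hμ0 τ)]
            exact mul_le_mul_of_nonneg_left (abs_sub_le_NN F η τ) (hμ0 τ)
        _ = NN F := by rw [← Finset.sum_mul, hμ1, one_mul]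
    have hNNf : NN f ≤ (Fintype.card V : ℝ) := by
      rw [NN]
      calc ∑ x : V, mSup x f ≤ ∑ _x : V, (1:ℝ) := by
            apply Finset.sum_le_sum
            intro x _
            apply mSup_le
            intro η'
            rw [hf]
            dsimp only
            split_ifs <;> norm_num
        _ = (Fintype.card V : ℝ) := by simp
    calc |∑ σ ∈ A, NormedSpace.exp (t • nvQ G δ) η σ - ∑ σ ∈ A, μ σ| ≤ NN F := habs
      _ ≤ Real.exp (-(2 * δ / (2 * δ + 1)) * t) * NN f := NN_exp_le G hδ hdeg t ht0 f
      _ ≤ Real.exp (-(2 * δ / (2 * δ + 1)) * t) * (Fintype.card V : ℝ) := by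
          exact mul_le_mul_of_nonneg_left hNNf (Real.exp_pos _).le
      _ ≤ ε := hexp
  refine ⟨main, ?_⟩
  apply csInf_le
  · exact ⟨0, fun s hs => hs.1⟩
  · exact ⟨hT0, main _ le_rfl⟩
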